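/- For a connected finite weighted graph, the dual Cheeger constant h̄ = max over pairs of nonempty disjoint subsets V1, V2 of V of 2·b(V1,V2)/(b(V1)+b(V2)) satisfies h̄ ≤ 1, with equality if and only if the graph is bipartite. -/

import Mathlib

open Finset

theorem dual_cheeger_le_one_iff_bipartite
    {V : Type*} [Fintype V] [DecidableEq V] {F : Type*} [Field F] [LinearOrder F] [IsStrictOrderedRing F]
    (b : V → V → F)
    (hsymm : ∀ x y, b x y = b y x)
    (hnn : ∀ x y, 0 ≤ b x y)
    (hloop : ∀ x, b x x = 0)
    (hiso : ∀ x, 0 < ∑ y, b x y)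
    (hconn : ∀ x y : V, Relation.ReflTransGen (fun u v => 0 < b u v) x y)
    (hbar : F)
    (hmax : IsGreatest {r : F | ∃ V1 V2 : Finset V, V1.Nonempty ∧ V2.Nonempty ∧
      Disjoint V1 V2 ∧
      r = 2 * (∑ x ∈ V1, ∑ y ∈ V2, b x y) /
        ((∑ x ∈ V1, ∑ y, b x y) + (∑ x ∈ V2, ∑ y, b x y))} hbar) :
    hbar ≤ 1 ∧
      (hbar = 1 ↔ ∃ P : V → Bool, ∀ x y, 0 < b x y → P x ≠ P y) := by
  have hBle : ∀ (A B : Finset V), (∑ x ∈ A, ∑ y ∈ B, b x y) ≤ ∑ x ∈ A, ∑ y, b x y := by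
    intro A B
    refine Finset.sum_le_sum fun x _ => ?_
    exact Finset.sum_le_sum_of_subset_of_nonneg (Finset.subset_univ B) (fun y _ _ => hnn x y)
  have hBsymm : ∀ (A B : Finset V), (∑ x ∈ A, ∑ y ∈ B, b x y) = ∑ x ∈ B, ∑ y ∈ A, b x y := by
    intro A B
    rw [Finset.sum_comm]
    exact Finset.sum_congr rfl fun x _ => Finset.sum_congr rfl fun y _ => hsymm y x
  have hDpos : ∀ (A : Finset V), A.Nonempty → 0 < ∑ x ∈ A, ∑ y, b x y := by
    rintro A ⟨a, ha⟩
    exact Finset.sum_pos' (fun x _ => le_of_lt (hiso x)) ⟨a, ha, hiso a⟩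
  -- any element of the set is ≤ 1
  have hle1 : ∀ r ∈ {r : F | ∃ V1 V2 : Finset V, V1.Nonempty ∧ V2.Nonempty ∧
      Disjoint V1 V2 ∧
      r = 2 * (∑ x ∈ V1, ∑ y ∈ V2, b x y) /
        ((∑ x ∈ V1, ∑ y, b x y) + (∑ x ∈ V2, ∑ y, b x y))}, r ≤ 1 := by
    rintro r ⟨V1, V2, h1, h2, hd, rfl⟩
    have hden : 0 < (∑ x ∈ V1, ∑ y, b x y) + (∑ x ∈ V2, ∑ y, b x y) :=
      add_pos (hDpos V1 h1) (hDpos V2 h2)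
    rw [div_le_one hden]
    have h1' := hBle V1 V2
    have h2' : (∑ x ∈ V1, ∑ y ∈ V2, b x y) ≤ ∑ x ∈ V2, ∑ y, b x y := by
      rw [hBsymm]; exact hBle V2 V1
    linarith
  have hbar_le : hbar ≤ 1 := hle1 hbar hmax.1
  refine ⟨hbar_le, ?_, ?_⟩
  · -- hbar = 1 → bipartite
    intro h1
    rw [h1] at hmax
    obtain ⟨V1, V2, hne1, hne2, hd, heq⟩ := hmax.1
    have hden : 0 < (∑ x ∈ V1, ∑ y, b x y) + (∑ x ∈ V2, ∑ y, b x y) :=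
      add_pos (hDpos V1 hne1) (hDpos V2 hne2)
    have h2B : 2 * (∑ x ∈ V1, ∑ y ∈ V2, b x y)
        = (∑ x ∈ V1, ∑ y, b x y) + (∑ x ∈ V2, ∑ y, b x y) :=
      (div_eq_one_iff_eq hden.ne').mp heq.symm
    have hle1' := hBle V1 V2
    have hle2' : (∑ x ∈ V1, ∑ y ∈ V2, b x y) ≤ ∑ x ∈ V2, ∑ y, b x y := by
      rw [hBsymm]; exact hBle V2 V1
    have hB1 : (∑ x ∈ V1, ∑ y ∈ V2, b x y) = ∑ x ∈ V1, ∑ y, b x y := by linarith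
    have hB2 : (∑ x ∈ V1, ∑ y ∈ V2, b x y) = ∑ x ∈ V2, ∑ y, b x y := by linarith
    -- every edge from V1 goes into V2
    have hz1 : ∀ x ∈ V1, ∀ y, y ∉ V2 → b x y = 0 := by
      have hsplit : (∑ x ∈ V1, ∑ y ∈ V2ᶜ, b x y) = 0 := by
        have : ∀ x, (∑ y ∈ V2, b x y) + (∑ y ∈ V2ᶜ, b x y) = ∑ y, b x y :=
          fun x => Finset.sum_add_sum_compl V2 (b x)
        have := Finset.sum_congr rfl (fun x (_ : x ∈ V1) => this x)
        rw [Finset.sum_add_distrib] at this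
        linarith [hB1, this]
      intro x hx y hy
      have h1 := (Finset.sum_eq_zero_iff_of_nonneg
        (fun x _ => Finset.sum_nonneg fun y _ => hnn x y)).mp hsplit x hx
      exact (Finset.sum_eq_zero_iff_of_nonneg (fun y _ => hnn x y)).mp h1 y
        (Finset.mem_compl.mpr hy)
    have hz2 : ∀ x ∈ V2, ∀ y, y ∉ V1 → b x y = 0 := by
      have hB2' : (∑ x ∈ V2, ∑ y ∈ V1, b x y) = ∑ x ∈ V2, ∑ y, b x y := by
        rw [← hBsymm]; exact hB2
      have hsplit : (∑ x ∈ V2, ∑ y ∈ V1ᶜ, b x y) = 0 := by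
        have : ∀ x, (∑ y ∈ V1, b x y) + (∑ y ∈ V1ᶜ, b x y) = ∑ y, b x y :=
          fun x => Finset.sum_add_sum_compl V1 (b x)
        have := Finset.sum_congr rfl (fun x (_ : x ∈ V2) => this x)
        rw [Finset.sum_add_distrib] at this
        linarith [hB2', this]
      intro x hx y hy
      have h1 := (Finset.sum_eq_zero_iff_of_nonneg
        (fun x _ => Finset.sum_nonneg fun y _ => hnn x y)).mp hsplit x hx
      exact (Finset.sum_eq_zero_iff_of_nonneg (fun y _ => hnn x y)).mp h1 y
        (Finset.mem_compl.mpr hy)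
    -- every vertex lies in V1 ∪ V2
    obtain ⟨x0, hx0⟩ := hne1
    have hcover : ∀ z : V, z ∈ V1 ∨ z ∈ V2 := by
      intro z
      have := hconn x0 z
      induction this with
      | refl => exact Or.inl hx0
      | tail _ hbc ih =>
        rcases ih with h | h
        · right
          by_contra hc
          exact absurd (hz1 _ h _ hc) (ne_of_gt hbc)
        · left
          by_contra hc
          exact absurd (hz2 _ h _ hc) (ne_of_gt hbc)
    refine ⟨fun x => decide (x ∈ V1), fun x y hxy => ?_⟩
    by_cases hx : x ∈ V1
    · have hy2 : y ∈ V2 := by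
        by_contra hc
        exact absurd (hz1 _ hx _ hc) (ne_of_gt hxy)
      have hy1 : y ∉ V1 := Finset.disjoint_right.mp hd hy2
      simp [hx, hy1]
    · have hx2 : x ∈ V2 := (hcover x).resolve_left hx
      have hy1 : y ∈ V1 := by
        by_contra hc
        exact absurd (hz2 _ hx2 _ hc) (ne_of_gt hxy)
      simp [hx, hy1]
  · -- bipartite → hbar = 1
    rintro ⟨P, hP⟩
    -- V is nonempty
    obtain ⟨Va, -, ⟨x0, hx0⟩, -⟩ := hmax.1
    have hex : ∃ y, 0 < b x0 y := by
      by_contra hc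
      push_neg at hc
      have : (∑ y, b x0 y) = 0 :=
        Finset.sum_eq_zero fun y _ => le_antisymm (hc y) (hnn x0 y)
      exact absurd this (ne_of_gt (hiso x0))
    obtain ⟨y0, hy0⟩ := hex
    have hPxy := hP x0 y0 hy0
    set W1 : Finset V := Finset.univ.filter (fun x => P x = true) with hW1
    set W2 : Finset V := Finset.univ.filter (fun x => P x = false) with hW2
    have hmem1 : ∀ x, x ∈ W1 ↔ P x = true := by intro x; simp [hW1]
    have hmem2 : ∀ x, x ∈ W2 ↔ P x = false := by intro x; simp [hW2]
    have hne1 : W1.Nonempty := by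
      cases h : P x0 with
      | true => exact ⟨x0, (hmem1 x0).mpr h⟩
      | false =>
        refine ⟨y0, (hmem1 y0).mpr ?_⟩
        cases h' : P y0 with
        | true => rfl
        | false => exact absurd (h.trans h'.symm) hPxy
    have hne2 : W2.Nonempty := by
      cases h : P x0 with
      | false => exact ⟨x0, (hmem2 x0).mpr h⟩
      | true =>
        refine ⟨y0, (hmem2 y0).mpr ?_⟩
        cases h' : P y0 with
        | false => rfl
        | true => exact absurd (h.trans h'.symm) hPxy
    have hd : Disjoint W1 W2 := by
      rw [Finset.disjoint_left]
      intro a ha1 ha2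
      have h1 := (hmem1 a).mp ha1
      have h2 := (hmem2 a).mp ha2
      simp [h1] at h2
    have hD1 : (∑ x ∈ W1, ∑ y, b x y) = ∑ x ∈ W1, ∑ y ∈ W2, b x y := by
      refine Finset.sum_congr rfl fun x hx => ?_
      refine (Finset.sum_subset (Finset.subset_univ W2) fun y _ hy => ?_).symm
      have hPy : P y = true := by
        cases h : P y with
        | true => rfl
        | false => exact absurd ((hmem2 y).mpr h) hy
      have hPx := (hmem1 x).mp hx
      by_contra hc
      exact hP x y (lt_of_le_of_ne (hnn x y) (Ne.symm hc)) (hPx.trans hPy.symm)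
    have hD2 : (∑ x ∈ W2, ∑ y, b x y) = ∑ x ∈ W1, ∑ y ∈ W2, b x y := by
      rw [hBsymm W1 W2]
      refine Finset.sum_congr rfl fun x hx => ?_
      refine (Finset.sum_subset (Finset.subset_univ W1) fun y _ hy => ?_).symm
      have hPy : P y = false := by
        cases h : P y with
        | false => rfl
        | true => exact absurd ((hmem1 y).mpr h) hy
      have hPx := (hmem2 x).mp hx
      by_contra hc
      exact hP x y (lt_of_le_of_ne (hnn x y) (Ne.symm hc)) (hPx.trans hPy.symm)
    have hden : 0 < (∑ x ∈ W1, ∑ y, b x y) + (∑ x ∈ W2, ∑ y, b x y) :=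
      add_pos (hDpos W1 hne1) (hDpos W2 hne2)
    have hone : (1 : F) ∈ {r : F | ∃ V1 V2 : Finset V, V1.Nonempty ∧ V2.Nonempty ∧
        Disjoint V1 V2 ∧
        r = 2 * (∑ x ∈ V1, ∑ y ∈ V2, b x y) /
          ((∑ x ∈ V1, ∑ y, b x y) + (∑ x ∈ V2, ∑ y, b x y))} := by
      refine ⟨W1, W2, hne1, hne2, hd, ?_⟩
      rw [eq_comm, div_eq_one_iff_eq hden.ne', hD1, hD2]
      ring
    exact le_antisymm hbar_le (hmax.2 hone)
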